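/- arXiv:2201.03394 — 4 statements merged into one kernel-verified Lean document; each statement's English description precedes it below -/
import Mathlib

section
/- Let N ≥ 1, let Ω ⊆ ℝ^N be open, and let u, v : ℝ^N → ℝ be differentiable at every point of Ω with u(x) > 0 for all x ∈ Ω. Let A be a symmetric positive semidefinite N×N real matrix. Then for every x ∈ Ω one has ⟨A ∇u(x), ∇(v²/u)(x)⟩ ≤ ⟨A ∇v(x), ∇v(x)⟩. Moreover, if A is positive definite, then equality holds at x if and only if v(x) ∇u(x)/u(x) = ∇v(x). -/
open MeasureTheory RealInnerProductSpace

/-- **Picone-type inequality** (Lemma A.1, second part).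
Let `Ω ⊆ ℝ^N` be open and `u, v : ℝ^N → ℝ` differentiable on `Ω` with `u > 0` on `Ω`.
Let `A` be a symmetric positive semidefinite `N × N` real matrix. Then for every `x ∈ Ω`
one has `⟨A ∇u(x), ∇(v²/u)(x)⟩ ≤ ⟨A ∇v(x), ∇v(x)⟩`; moreover, if `A` is positive definite,
then equality holds at `x` if and only if `v(x) ∇u(x)/u(x) = ∇v(x)`. -/
theorem picone_inequality (N : ℕ) (hN : 1 ≤ N) (Ω : Set (EuclideanSpace ℝ (Fin N)))
    (hΩ : IsOpen Ω) (u v : EuclideanSpace ℝ (Fin N) → ℝ)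
    (hu : ∀ x ∈ Ω, DifferentiableAt ℝ u x)
    (hv : ∀ x ∈ Ω, DifferentiableAt ℝ v x)
    (hupos : ∀ x ∈ Ω, 0 < u x)
    (A : Matrix (Fin N) (Fin N) ℝ) (hA : A.IsSymm)
    (hpsd : ∀ ξ : EuclideanSpace ℝ (Fin N), 0 ≤ ⟪Matrix.toEuclideanLin A ξ, ξ⟫) :
    ∀ x ∈ Ω,
      ⟪Matrix.toEuclideanLin A (gradient u x),
          gradient (fun y => v y ^ 2 / u y) x⟫
        ≤ ⟪Matrix.toEuclideanLin A (gradient v x), gradient v x⟫ ∧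
      ((∀ ξ : EuclideanSpace ℝ (Fin N), ξ ≠ 0 → 0 < ⟪Matrix.toEuclideanLin A ξ, ξ⟫) →
        (⟪Matrix.toEuclideanLin A (gradient u x),
            gradient (fun y => v y ^ 2 / u y) x⟫
          = ⟪Matrix.toEuclideanLin A (gradient v x), gradient v x⟫
          ↔ (v x / u x) • gradient u x = gradient v x)) := by
  intro x hx
  set T := Matrix.toEuclideanLin A with hT
  have hux := hu x hx
  have hvx := hv x hx
  have hu0 : u x ≠ 0 := (hupos x hx).ne'
  set gu := gradient u x with hgu
  set gv := gradient v x with hgv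
  set t : ℝ := v x / u x with ht
  -- symmetry of T
  have hsymm : ∀ ξ η : EuclideanSpace ℝ (Fin N), ⟪T ξ, η⟫ = ⟪ξ, T η⟫ := by
    intro ξ η
    have hAc : A.conjTranspose = A := by
      rw [Matrix.conjTranspose]
      ext i j
      simpa using congrFun (congrFun hA.eq i) j
    have hadj : Matrix.toEuclideanLin A.conjTranspose
        = LinearMap.adjoint (Matrix.toEuclideanLin A) :=
      Matrix.toEuclideanLin_conjTranspose_eq_adjoint A
    rw [hAc] at hadj
    calc ⟪T ξ, η⟫ = ⟪(LinearMap.adjoint T) ξ, η⟫ := by rw [hT, ← hadj]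
    _ = ⟪ξ, T η⟫ := LinearMap.adjoint_inner_left T η ξ
  -- toDual sends gradients to fderivs
  have hdu : (InnerProductSpace.toDual ℝ (EuclideanSpace ℝ (Fin N))) gu = fderiv ℝ u x := by
    rw [hgu, gradient]
    exact (InnerProductSpace.toDual ℝ _).apply_symm_apply _
  have hdv : (InnerProductSpace.toDual ℝ (EuclideanSpace ℝ (Fin N))) gv = fderiv ℝ v x := by
    rw [hgv, gradient]
    exact (InnerProductSpace.toDual ℝ _).apply_symm_apply _
  -- compute the gradient of v^2/u
  have hgradf : gradient (fun y => v y ^ 2 / u y) x = (2 * t) • gv - t ^ 2 • gu := by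
    have h1 : HasFDerivAt (fun y => v y * v y)
        (v x • fderiv ℝ v x + v x • fderiv ℝ v x) x :=
      hvx.hasFDerivAt.mul hvx.hasFDerivAt
    have h2 : HasFDerivAt (fun y => (u y)⁻¹)
        ((-(u x ^ 2)⁻¹ : ℝ) • fderiv ℝ u x) x :=
      (hasDerivAt_inv hu0).comp_hasFDerivAt x hux.hasFDerivAt
    have h3 := h1.mul h2
    have hfun : (fun y => v y ^ 2 / u y) = fun y => (v y * v y) * (u y)⁻¹ := by
      funext y; rw [sq, div_eq_mul_inv]
    have h3' : HasFDerivAt (fun y => v y ^ 2 / u y)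
        ((v x * v x) • ((-(u x ^ 2)⁻¹ : ℝ) • fderiv ℝ u x)
          + (u x)⁻¹ • (v x • fderiv ℝ v x + v x • fderiv ℝ v x)) x := by
      rw [hfun]; exact h3
    have hG : HasGradientAt (fun y => v y ^ 2 / u y) ((2 * t) • gv - t ^ 2 • gu) x := by
      rw [hasGradientAt_iff_hasFDerivAt]
      refine h3'.congr_fderiv ?_
      symm
      rw [map_sub]
      rw [LinearIsometryEquiv.map_smulₛₗ, LinearIsometryEquiv.map_smulₛₗ]
      simp only [starRingEnd_apply, star_trivial]
      rw [hdu, hdv]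
      match_scalars
      · field_simp [ht]; rw [ht]; field_simp; ring
      · field_simp [ht]; rw [ht]; field_simp
    exact hG.gradient
  rw [hgradf]
  -- algebra with inner products
  set a : ℝ := ⟪T gu, gu⟫ with ha
  set b : ℝ := ⟪T gu, gv⟫ with hb
  set c : ℝ := ⟪T gv, gv⟫ with hc
  have hba : ⟪T gv, gu⟫ = b := by rw [hsymm, real_inner_comm, hb, hsymm]
  have hlhs : ⟪T gu, (2 * t) • gv - t ^ 2 • gu⟫ = 2 * t * b - t ^ 2 * a := by
    rw [inner_sub_right, real_inner_smul_right, real_inner_smul_right]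
  set w : EuclideanSpace ℝ (Fin N) := gv - t • gu with hw
  have hkey : ⟪T w, w⟫ = c - 2 * t * b + t ^ 2 * a := by
    simp only [hw, map_sub, LinearMap.map_smul, inner_sub_left, inner_sub_right,
      real_inner_smul_left, real_inner_smul_right, hba]
    rw [← ha, ← hb, ← hc]
    ring
  constructor
  · have := hpsd w
    rw [hkey] at this
    rw [hlhs]
    linarith
  · intro hpd
    rw [hlhs]
    constructor
    · intro heq
      have hw0 : w = 0 := by
        by_contra hne
        have := hpd w hne
        rw [hkey] at this
        linarith
      have h0 : gv - t • gu = 0 := by rw [← hw]; exact hw0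
      exact (sub_eq_zero.mp h0).symm
    · intro heq
      have hw0 : w = 0 := by rw [hw, ← heq, sub_self]
      have hz : ⟪T w, w⟫ = 0 := by rw [hw0]; simp
      rw [hkey] at hz
      linarith
end

section
/- Let p > 2 be a real number. For every z, w ∈ ℝ^N one has ∫₀¹ |t z + (1 − t) w|^{p−2} dt ≥ 4^{−(p−1)} (|z| + |w|)^{p−2}. -/
open MeasureTheory

private lemma aux_cont (N : ℕ) (p : ℝ) (hp : 2 < p) (z w : EuclideanSpace ℝ (Fin N)) :
    Continuous fun t : ℝ => ‖t • z + (1 - t) • w‖ ^ (p - 2) := by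
  apply Continuous.rpow_const
  · continuity
  · intro x; exact Or.inr (by linarith)

private lemma aux_main (N : ℕ) (p : ℝ) (hp : 2 < p)
    (z w : EuclideanSpace ℝ (Fin N)) (hzw : ‖w‖ ≤ ‖z‖) :
    (4 : ℝ) ^ (-(p - 1)) * (‖z‖ + ‖w‖) ^ (p - 2)
      ≤ ∫ t in (0:ℝ)..1, ‖t • z + (1 - t) • w‖ ^ (p - 2) := by
  set c : ℝ := ‖z‖ + ‖w‖ with hc_def
  have hc : 0 ≤ c := by positivity
  have hcont := aux_cont N p hp z w
  have hint : ∀ a b : ℝ, IntervalIntegrable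
      (fun t : ℝ => ‖t • z + (1 - t) • w‖ ^ (p - 2)) volume a b :=
    fun a b => hcont.intervalIntegrable a b
  have h1 : ∫ t in ((3:ℝ)/4)..1, ‖t • z + (1 - t) • w‖ ^ (p - 2)
      ≤ ∫ t in (0:ℝ)..1, ‖t • z + (1 - t) • w‖ ^ (p - 2) := by
    rw [← intervalIntegral.integral_add_adjacent_intervals (hint 0 (3/4)) (hint (3/4) 1)]
    have : (0:ℝ) ≤ ∫ t in (0:ℝ)..(3/4), ‖t • z + (1 - t) • w‖ ^ (p - 2) :=
      intervalIntegral.integral_nonneg (by norm_num)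
        (fun t _ => Real.rpow_nonneg (norm_nonneg _) _)
    linarith
  have h2 : (1/4 : ℝ) * (c/4) ^ (p - 2)
      ≤ ∫ t in ((3:ℝ)/4)..1, ‖t • z + (1 - t) • w‖ ^ (p - 2) := by
    have hconst : ∫ t in ((3:ℝ)/4)..1, (c/4) ^ (p - 2) = (1/4 : ℝ) * (c/4) ^ (p - 2) := by
      simp [intervalIntegral.integral_const]
      ring_nf
      tauto
    rw [← hconst]
    apply intervalIntegral.integral_mono_on (by norm_num) (intervalIntegrable_const) (hint _ _)
    intro t ht
    obtain ⟨ht1, ht2⟩ := ht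
    apply Real.rpow_le_rpow (by positivity) _ (by linarith)
    have hA : ‖t • z‖ ≤ ‖t • z + (1 - t) • w‖ + ‖(1 - t) • w‖ := by
      calc ‖t • z‖ = ‖(t • z + (1 - t) • w) - (1 - t) • w‖ := by congr 1; abel
        _ ≤ ‖t • z + (1 - t) • w‖ + ‖(1 - t) • w‖ := norm_sub_le _ _
    have hz : ‖t • z‖ = t * ‖z‖ := by
      rw [norm_smul, Real.norm_of_nonneg (by linarith)]
    have hw : ‖(1 - t) • w‖ = (1 - t) * ‖w‖ := by
      rw [norm_smul, Real.norm_of_nonneg (by linarith)]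
    have hz0 : (0:ℝ) ≤ ‖z‖ := norm_nonneg _
    have hw0 : (0:ℝ) ≤ ‖w‖ := norm_nonneg _
    rw [hz, hw] at hA
    nlinarith [hA]
  have heq : (4 : ℝ) ^ (-(p - 1)) * c ^ (p - 2) = (1/4 : ℝ) * (c/4) ^ (p - 2) := by
    have h4 : (4:ℝ) ^ (p - 1) = 4 ^ (p - 2) * 4 := by
      rw [show p - 1 = (p - 2) + 1 by ring, Real.rpow_add (by norm_num), Real.rpow_one]
    rw [Real.rpow_neg (by norm_num : (0:ℝ) ≤ 4), h4, Real.div_rpow hc (by norm_num)]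
    have hpos : (0:ℝ) < (4:ℝ) ^ (p - 2) := Real.rpow_pos_of_pos (by norm_num) _
    field_simp
  rw [heq]
  linarith

/-- **Lemma A.3.** Let `p > 2`. For every `z, w ∈ ℝ^N` one has
`∫₀¹ |t z + (1 − t) w|^{p−2} dt ≥ 4^{−(p−1)} (|z| + |w|)^{p−2}`. -/
theorem integral_segment_norm_rpow_lower_bound (N : ℕ) (p : ℝ) (hp : 2 < p)
    (z w : EuclideanSpace ℝ (Fin N)) :
    (4 : ℝ) ^ (-(p - 1)) * (‖z‖ + ‖w‖) ^ (p - 2)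
      ≤ ∫ t in (0:ℝ)..1, ‖t • z + (1 - t) • w‖ ^ (p - 2) := by
  rcases le_total ‖w‖ ‖z‖ with h | h
  · exact aux_main N p hp z w h
  · have key := aux_main N p hp w z h
    have hsymm : ∫ t in (0:ℝ)..1, ‖t • z + (1 - t) • w‖ ^ (p - 2)
        = ∫ t in (0:ℝ)..1, ‖t • w + (1 - t) • z‖ ^ (p - 2) := by
      have := intervalIntegral.integral_comp_sub_left
        (a := (0:ℝ)) (b := 1) (fun t : ℝ => ‖t • w + (1 - t) • z‖ ^ (p - 2)) 1
      simp only [sub_sub_cancel] at this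
      norm_num at this
      rw [← this]
      congr 1
      ext t
      rw [add_comm]
    rw [hsymm, show ‖z‖ + ‖w‖ = ‖w‖ + ‖z‖ from add_comm _ _]
    exact key
end

section
/- Let p > 2 be a real number. For every z, w ∈ ℝ^N, the matrix-valued map t ↦ D²H(t z + (1 − t) w) is Bochner integrable on [0,1] and |z|^{p−2} z − |w|^{p−2} w = (∫₀¹ D²H(t z + (1 − t) w) dt) (z − w). -/
open MeasureTheory RealInnerProductSpace

set_option maxHeartbeats 1000000
set_option synthInstance.maxHeartbeats 400000

/- For real `p`, the matrix `D²H(z) := |z|^{p−2} Id + (p−2) |z|^{p−4} z⊗z` for `z ≠ 0`,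
and `D²H(0) := 0`, viewed as a continuous linear map on `ℝ^N`.
For `z ≠ 0` this is the Hessian of `H(z) = |z|^p / p`. -/
open Classical in
noncomputable def D2H {N : ℕ} (p : ℝ) (z : EuclideanSpace ℝ (Fin N)) :
    EuclideanSpace ℝ (Fin N) →L[ℝ] EuclideanSpace ℝ (Fin N) :=
  if z = 0 then 0
  else ‖z‖ ^ (p - 2) • ContinuousLinearMap.id ℝ (EuclideanSpace ℝ (Fin N)) +
    ((p - 2) * ‖z‖ ^ (p - 4)) • (innerSL ℝ z).smulRight z

lemma norm_D2H_le {N : ℕ} (p : ℝ) (hp : 2 < p) (v : EuclideanSpace ℝ (Fin N)) :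
    ‖D2H p v‖ ≤ (p - 1) * ‖v‖ ^ (p - 2) := by
  by_cases hv : v = 0
  · simp [D2H, hv, Real.zero_rpow (by linarith : p - 2 ≠ 0)]
  · have hvp : (0:ℝ) < ‖v‖ := norm_pos_iff.mpr hv
    rw [D2H, if_neg hv]
    have h1 : ‖(‖v‖ ^ (p - 2) • ContinuousLinearMap.id ℝ (EuclideanSpace ℝ (Fin N)))‖
        ≤ ‖v‖ ^ (p - 2) := by
      refine (ContinuousLinearMap.opNorm_smul_le _ _).trans ?_
      have hid := ContinuousLinearMap.norm_id_le (E := EuclideanSpace ℝ (Fin N)) (𝕜 := ℝ)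
      calc ‖(‖v‖ ^ (p-2) : ℝ)‖ * ‖ContinuousLinearMap.id ℝ (EuclideanSpace ℝ (Fin N))‖
          ≤ ‖(‖v‖ ^ (p-2) : ℝ)‖ * 1 := mul_le_mul_of_nonneg_left hid (norm_nonneg _)
        _ = ‖v‖ ^ (p - 2) := by
            rw [mul_one, Real.norm_eq_abs, abs_of_nonneg (Real.rpow_nonneg (norm_nonneg _) _)]
    have h2 : ‖((p - 2) * ‖v‖ ^ (p - 4)) • (innerSL ℝ v).smulRight v‖
        ≤ (p - 2) * ‖v‖ ^ (p - 2) := by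
      refine (ContinuousLinearMap.opNorm_smul_le _ _).trans ?_
      rw [ContinuousLinearMap.norm_smulRight_apply, innerSL_apply_norm]
      rw [Real.norm_eq_abs, abs_of_nonneg (mul_nonneg (by linarith) (Real.rpow_nonneg (norm_nonneg _) _))]
      have hvv : ‖v‖ ^ (p - 4) * (‖v‖ * ‖v‖) = ‖v‖ ^ (p - 2) := by
        nth_rewrite 2 3 [← Real.rpow_one ‖v‖]
        rw [← Real.rpow_add hvp, ← Real.rpow_add hvp]
        congr 1
        ring
      rw [mul_assoc, hvv]
    calc ‖_ + _‖ ≤ _ + _ := norm_add_le _ _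
      _ ≤ ‖v‖ ^ (p - 2) + (p - 2) * ‖v‖ ^ (p - 2) := add_le_add h1 h2
      _ = (p - 1) * ‖v‖ ^ (p - 2) := by ring

lemma continuous_D2H {N : ℕ} (p : ℝ) (hp : 2 < p) :
    Continuous (D2H (N := N) p) := by
  rw [continuous_iff_continuousAt]
  intro v
  by_cases hv : v = 0
  · subst hv
    rw [ContinuousAt]
    have h0 : D2H (N := N) p 0 = 0 := by simp [D2H]
    rw [h0]
    apply squeeze_zero_norm (norm_D2H_le p hp)
    have : Filter.Tendsto (fun x : EuclideanSpace ℝ (Fin N) => ‖x‖ ^ (p - 2)) (nhds 0)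
        (nhds 0) := by
      have := (continuous_norm.tendsto (0 : EuclideanSpace ℝ (Fin N))).rpow_const
        (p := p - 2) (Or.inr (by linarith))
      simpa [Real.zero_rpow (by linarith : p - 2 ≠ 0)] using this
    simpa using this.const_mul (p - 1)
  · have hcont : ContinuousAt (fun z : EuclideanSpace ℝ (Fin N) =>
        ‖z‖ ^ (p - 2) • ContinuousLinearMap.id ℝ (EuclideanSpace ℝ (Fin N)) +
        ((p - 2) * ‖z‖ ^ (p - 4)) • (innerSL ℝ z).smulRight z) v := by
      have hn : ContinuousAt (fun z : EuclideanSpace ℝ (Fin N) => ‖z‖) v :=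
        continuous_norm.continuousAt
      have hne : ‖v‖ ≠ 0 := norm_ne_zero_iff.mpr hv
      have h1 : ContinuousAt (fun z : EuclideanSpace ℝ (Fin N) => ‖z‖ ^ (p - 2)) v :=
        hn.rpow_const (Or.inl hne)
      have h2 : ContinuousAt (fun z : EuclideanSpace ℝ (Fin N) => ‖z‖ ^ (p - 4)) v :=
        hn.rpow_const (Or.inl hne)
      have h3 : ContinuousAt (fun z : EuclideanSpace ℝ (Fin N) =>
          (innerSL ℝ z).smulRight z) v :=
        ((isBoundedBilinearMap_smulRight (𝕜 := ℝ)).continuous.comp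
          ((innerSL ℝ).continuous.prodMk continuous_id)).continuousAt
      exact (h1.smul continuousAt_const).add (((continuousAt_const.mul h2).smul h3))
    apply hcont.congr
    filter_upwards [isOpen_ne.mem_nhds (by simpa using hv)] with x hx
    simp [D2H, if_neg hx]

lemma hasFDerivAt_D2H {N : ℕ} (p : ℝ) (hp : 2 < p) (v : EuclideanSpace ℝ (Fin N)) :
    HasFDerivAt (fun x : EuclideanSpace ℝ (Fin N) => ‖x‖ ^ (p - 2) • x) (D2H p v) v := by
  by_cases hv : v = 0
  · subst hv
    have h0 : D2H (N := N) p 0 = 0 := by simp [D2H]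
    rw [h0, hasFDerivAt_iff_isLittleO_nhds_zero]
    simp only [zero_add, smul_zero, norm_zero, Real.zero_rpow (by linarith : p - 2 ≠ 0), zero_smul, sub_zero,
      ContinuousLinearMap.zero_apply]
    rw [Asymptotics.isLittleO_iff]
    intro c hc
    have : Filter.Tendsto (fun x : EuclideanSpace ℝ (Fin N) => ‖x‖ ^ (p - 2)) (nhds 0)
        (nhds 0) := by
      have := (continuous_norm.tendsto (0 : EuclideanSpace ℝ (Fin N))).rpow_const
        (p := p - 2) (Or.inr (by linarith))
      simpa [Real.zero_rpow (by linarith : p - 2 ≠ 0)] using this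
    filter_upwards [this.eventually_le_const hc] with x hx
    rw [norm_smul, Real.norm_eq_abs, abs_of_nonneg (Real.rpow_nonneg (norm_nonneg _) _)]
    exact mul_le_mul_of_nonneg_right hx (norm_nonneg _)
  · have hvp : (0:ℝ) < ‖v‖ := norm_pos_iff.mpr hv
    have hsq : (0:ℝ) < ‖v‖ ^ 2 := by positivity
    have h1 : HasFDerivAt (fun x : EuclideanSpace ℝ (Fin N) => ‖x‖ ^ (p - 2))
        (((p - 2) * ‖v‖ ^ (p - 4)) • innerSL ℝ v) v := by
      have h2 := ((hasStrictFDerivAt_norm_sq v).rpow_const (p := (p - 2) / 2)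
        (Or.inl hsq.ne')).hasFDerivAt
      have heq : (fun x : EuclideanSpace ℝ (Fin N) => (‖x‖ ^ 2) ^ ((p - 2) / 2))
          = fun x : EuclideanSpace ℝ (Fin N) => ‖x‖ ^ (p - 2) := by
        funext x
        rw [← Real.rpow_natCast ‖x‖ 2, ← Real.rpow_mul (norm_nonneg _)]
        norm_num
        congr 1
        ring
      rw [heq] at h2
      refine h2.congr_fderiv ?_
      have hpow : ((‖v‖ ^ 2 : ℝ)) ^ ((p - 2) / 2 - 1) = ‖v‖ ^ (p - 4) := by
        rw [← Real.rpow_natCast ‖v‖ 2, ← Real.rpow_mul (norm_nonneg _)]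
        congr 1
        push_cast
        ring
      rw [hpow]
      ext x
      simp only [ContinuousLinearMap.smul_apply, smul_eq_mul, ContinuousLinearMap.coe_smul',
        Pi.smul_apply, two_smul, ContinuousLinearMap.add_apply]
      ring
    have h3 := h1.smul (hasFDerivAt_id v)
    refine h3.congr_fderiv ?_
    symm
    rw [D2H, if_neg hv]
    congr 1
    ext x i
    simp [ContinuousLinearMap.smulRight_apply, smul_smul, mul_comm]

/-- **Equation (4.2).** Let `p > 2`. For every `z, w ∈ ℝ^N`, the map
`t ↦ D²H(t z + (1 − t) w)` is Bochner integrable on `[0,1]` and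
`|z|^{p−2} z − |w|^{p−2} w = (∫₀¹ D²H(t z + (1 − t) w) dt) (z − w)`. -/
theorem D2H_fundamental_theorem (N : ℕ) (p : ℝ) (hp : 2 < p)
    (z w : EuclideanSpace ℝ (Fin N)) :
    MeasureTheory.IntegrableOn (fun t : ℝ => D2H p (t • z + (1 - t) • w))
        (Set.Icc 0 1) volume ∧
    ‖z‖ ^ (p - 2) • z - ‖w‖ ^ (p - 2) • w
      = (∫ t in Set.Icc (0:ℝ) 1, D2H p (t • z + (1 - t) • w)) (z - w) := by
  set g : ℝ → EuclideanSpace ℝ (Fin N) := fun t => t • z + (1 - t) • w with hg_def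
  have hgc : Continuous g := by fun_prop
  have hcont : Continuous (fun t : ℝ => D2H p (g t)) := (continuous_D2H p hp).comp hgc
  have hInt : MeasureTheory.IntegrableOn (fun t : ℝ => D2H p (g t)) (Set.Icc 0 1) volume :=
    hcont.integrableOn_Icc
  refine ⟨hInt, ?_⟩
  have hg : ∀ t : ℝ, HasDerivAt g (z - w) t := by
    intro t
    have h1 : HasDerivAt (fun t : ℝ => t • z) z t := by
      simpa using (hasDerivAt_id t).smul_const z
    have h2 : HasDerivAt (fun t : ℝ => (1 - t) • w) (-w) t := by
      have : HasDerivAt (fun t : ℝ => (1 - t)) (-1) t := by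
        simpa using (hasDerivAt_id t).const_sub 1
      simpa using this.smul_const w
    rw [sub_eq_add_neg]
    exact h1.add h2
  have hf : ∀ t : ℝ, HasDerivAt (fun t => ‖g t‖ ^ (p - 2) • g t)
      (D2H p (g t) (z - w)) t := fun t =>
    (hasFDerivAt_D2H p hp (g t)).comp_hasDerivAt t (hg t)
  have happly : Continuous (fun t : ℝ => D2H p (g t) (z - w)) :=
    hcont.clm_apply continuous_const
  have key := intervalIntegral.integral_eq_sub_of_hasDerivAt
    (f := fun t => ‖g t‖ ^ (p - 2) • g t) (a := (0:ℝ)) (b := 1)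
    (fun t _ => hf t) (happly.intervalIntegrable 0 1)
  have key2 : ∫ t in (0:ℝ)..1, D2H p (g t) (z - w)
      = ‖z‖ ^ (p - 2) • z - ‖w‖ ^ (p - 2) • w := by
    rw [key]; simp [hg_def]
  have happ : (∫ t in Set.Icc (0:ℝ) 1, D2H p (g t)) (z - w)
      = ∫ t in Set.Icc (0:ℝ) 1, D2H p (g t) (z - w) :=
    ContinuousLinearMap.integral_apply hInt (z - w)
  show ‖z‖ ^ (p - 2) • z - ‖w‖ ^ (p - 2) • w
      = (∫ t in Set.Icc (0:ℝ) 1, D2H p (g t)) (z - w)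
  rw [happ]
  rw [MeasureTheory.integral_Icc_eq_integral_Ioc,
    ← intervalIntegral.integral_of_le (by norm_num : (0:ℝ) ≤ 1)]
  exact key2.symm
end

section
/- Let p > 2 be a real number and let z, w ∈ ℝ^N. Set A := ∫₀¹ D²H(t z + (1 − t) w) dt (entrywise Bochner integral). Then for every ξ ∈ ℝ^N one has 4^{−(p−1)} (|z| + |w|)^{p−2} |ξ|² ≤ ⟨A ξ, ξ⟩ ≤ (p − 1) (|z| + |w|)^{p−2} |ξ|². -/
open MeasureTheory RealInnerProductSpace

section Aux

lemma D2H_rpow_shift {x : ℝ} (hx : x ≠ 0) (p : ℝ) : x ^ (p-4) * (x*x) = x ^ (p-2) := by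
  rw [show x^(p-4)*(x*x) = x^(p-4)*x*x by ring, ← Real.rpow_add_one hx,
    ← Real.rpow_add_one hx]
  congr 1; ring

variable {N : ℕ}
local notation "E" => EuclideanSpace ℝ (Fin N)

lemma D2H_apply (p : ℝ) {z : E} (h : z ≠ 0) (ξ : E) :
    D2H p z ξ = ‖z‖^(p-2) • ξ + ((p-2)*‖z‖^(p-4)) • (⟪z,ξ⟫ • z) := by
  unfold D2H
  rw [if_neg h]
  simp only [ContinuousLinearMap.add_apply, ContinuousLinearMap.smul_apply,
    ContinuousLinearMap.id_apply, ContinuousLinearMap.smulRight_apply, innerSL_apply_apply]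

lemma D2H_inner (p : ℝ) (hp : 2 < p) (z ξ : E) :
    ⟪D2H p z ξ, ξ⟫ = ‖z‖^(p-2)*‖ξ‖^2 + ((p-2)*‖z‖^(p-4))*⟪z,ξ⟫^2 := by
  rcases eq_or_ne z 0 with h | h
  · simp [h, D2H, Real.zero_rpow (show p - 2 ≠ 0 by linarith)]
  · rw [D2H_apply p h, inner_add_left, real_inner_smul_left, real_inner_smul_left,
      real_inner_smul_left, real_inner_self_eq_norm_sq]
    ring

lemma D2H_cauchy_sq (z ξ : E) : ⟪z,ξ⟫^2 ≤ (‖z‖*‖z‖)*(‖ξ‖*‖ξ‖) := by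
  have h := real_inner_mul_inner_self_le z ξ
  rw [real_inner_self_eq_norm_mul_norm, real_inner_self_eq_norm_mul_norm] at h
  calc ⟪z,ξ⟫^2 = ⟪z,ξ⟫*⟪z,ξ⟫ := sq (⟪z,ξ⟫) ▸ by ring
  _ ≤ _ := h

lemma D2H_inner_lb (p : ℝ) (hp : 2 < p) (z ξ : E) :
    ‖z‖^(p-2)*‖ξ‖^2 ≤ ⟪D2H p z ξ, ξ⟫ := by
  rw [D2H_inner p hp]
  have h1 : 0 ≤ (p-2)*‖z‖^(p-4)*⟪z,ξ⟫^2 :=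
    mul_nonneg (mul_nonneg (by linarith) (Real.rpow_nonneg (norm_nonneg _) _)) (sq_nonneg _)
  linarith

lemma D2H_inner_ub (p : ℝ) (hp : 2 < p) (z ξ : E) :
    ⟪D2H p z ξ, ξ⟫ ≤ (p-1)*‖z‖^(p-2)*‖ξ‖^2 := by
  rw [D2H_inner p hp]
  rcases eq_or_ne z 0 with hz | hz
  · simp [hz, Real.zero_rpow (show p - 2 ≠ 0 by linarith)]
  · have hkey := D2H_rpow_shift (norm_ne_zero_iff.mpr hz) p
    have h1 : (0:ℝ) ≤ ‖z‖^(p-4) := Real.rpow_nonneg (norm_nonneg _) _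
    have h3 : ((p-2)*‖z‖^(p-4))*⟪z,ξ⟫^2 ≤ (p-2)*(‖z‖^(p-2)*‖ξ‖^2) := by
      calc ((p-2)*‖z‖^(p-4))*⟪z,ξ⟫^2
          ≤ ((p-2)*‖z‖^(p-4))*((‖z‖*‖z‖)*(‖ξ‖*‖ξ‖)) :=
            mul_le_mul_of_nonneg_left (D2H_cauchy_sq z ξ)
              (mul_nonneg (by linarith) h1)
        _ = (p-2)*(‖z‖^(p-2)*‖ξ‖^2) := by rw [← hkey]; ring
    have hgoal : (p-1)*‖z‖^(p-2)*‖ξ‖^2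
        = ‖z‖^(p-2)*‖ξ‖^2 + (p-2)*(‖z‖^(p-2)*‖ξ‖^2) := by ring
    linarith

lemma D2H_norm_le (p : ℝ) (hp : 2 < p) (z : E) : ‖D2H p z‖ ≤ (p-1)*‖z‖^(p-2) := by
  rcases eq_or_ne z 0 with h | h
  · have h0 : D2H p z = 0 := by rw [h]; simp [D2H]
    rw [h0, h, norm_zero, norm_zero, Real.zero_rpow (show p - 2 ≠ 0 by linarith), mul_zero]
  · refine ContinuousLinearMap.opNorm_le_bound _
      (mul_nonneg (by linarith) (Real.rpow_nonneg (norm_nonneg _) _)) fun ξ => ?_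
    have hkey := D2H_rpow_shift (norm_ne_zero_iff.mpr h) p
    have h1 : (0:ℝ) ≤ ‖z‖^(p-4) := Real.rpow_nonneg (norm_nonneg _) _
    have h2 : (0:ℝ) ≤ ‖z‖^(p-2) := Real.rpow_nonneg (norm_nonneg _) _
    have hin : |⟪z,ξ⟫| ≤ ‖z‖*‖ξ‖ := abs_real_inner_le_norm z ξ
    rw [D2H_apply p h]
    calc ‖‖z‖^(p-2) • ξ + ((p-2)*‖z‖^(p-4)) • (⟪z,ξ⟫ • z)‖
        ≤ ‖‖z‖^(p-2) • ξ‖ + ‖((p-2)*‖z‖^(p-4)) • (⟪z,ξ⟫ • z)‖ := norm_add_le _ _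
      _ = ‖z‖^(p-2)*‖ξ‖ + ((p-2)*‖z‖^(p-4))*(|⟪z,ξ⟫| * ‖z‖) := by
          rw [norm_smul, norm_smul, norm_smul]
          simp only [Real.norm_eq_abs]
          rw [abs_of_nonneg h2, abs_of_nonneg (mul_nonneg (show (0:ℝ) ≤ p-2 by linarith) h1)]
      _ ≤ ‖z‖^(p-2)*‖ξ‖ + ((p-2)*‖z‖^(p-4))*((‖z‖*‖ξ‖)*‖z‖) := by
          gcongr
      _ = (p-1)*‖z‖^(p-2)*‖ξ‖ := by
          have : ((p-2)*‖z‖^(p-4))*((‖z‖*‖ξ‖)*‖z‖) = (p-2)*(‖z‖^(p-2)*‖ξ‖) := by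
            rw [← hkey]; ring
          rw [this]; ring

lemma D2H_measurable (p : ℝ) : Measurable (fun z : E => D2H p z) := by
  unfold D2H
  refine Measurable.ite (measurableSet_singleton (0:E)) measurable_const ?_
  apply Measurable.add
  · exact (measurable_norm.pow_const _).smul_const _
  · apply Measurable.smul (f := fun z : E => (p-2)*‖z‖^(p-4)) (g := fun z : E => (innerSL ℝ z).smulRight z)
    · exact (measurable_norm.pow_const _).const_mul _
    · have hc : Continuous fun z : E => (innerSL ℝ z).smulRight z := by
        have h1 : Continuous (Function.uncurry fun (c : E →L[ℝ] ℝ) (v : E) =>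
            ContinuousLinearMap.smulRightL ℝ (EuclideanSpace ℝ (Fin N))
              (EuclideanSpace ℝ (Fin N)) c v) :=
          (ContinuousLinearMap.smulRightL ℝ E E).continuous₂
        have h2 : Continuous fun z : E => ((innerSL ℝ z : E →L[ℝ] ℝ), z) :=
          (innerSL ℝ).continuous.prodMk continuous_id
        exact h1.comp h2
      exact hc.measurable

end Aux

/-- **Estimate (4.5).** Let `p > 2`, `z, w ∈ ℝ^N` and `A := ∫₀¹ D²H(t z + (1 − t) w) dt`.
Then for every `ξ ∈ ℝ^N`,
`4^{−(p−1)} (|z| + |w|)^{p−2} |ξ|² ≤ ⟨A ξ, ξ⟩ ≤ (p − 1) (|z| + |w|)^{p−2} |ξ|²`. -/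
theorem D2H_integral_ellipticity (N : ℕ) (p : ℝ) (hp : 2 < p)
    (z w : EuclideanSpace ℝ (Fin N)) :
    ∀ ξ : EuclideanSpace ℝ (Fin N),
      (4 : ℝ) ^ (-(p - 1)) * (‖z‖ + ‖w‖) ^ (p - 2) * ‖ξ‖ ^ 2
          ≤ ⟪(∫ t in Set.Icc (0:ℝ) 1, D2H p (t • z + (1 - t) • w)) ξ, ξ⟫ ∧
        ⟪(∫ t in Set.Icc (0:ℝ) 1, D2H p (t • z + (1 - t) • w)) ξ, ξ⟫
          ≤ (p - 1) * (‖z‖ + ‖w‖) ^ (p - 2) * ‖ξ‖ ^ 2 := by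
  intro ξ
  have hp2 : (0:ℝ) ≤ p - 2 := by linarith
  have hM : (0:ℝ) ≤ ‖z‖ + ‖w‖ := by positivity
  -- norm of points on the segment
  have hseg : ∀ t ∈ Set.Icc (0:ℝ) 1, ‖t • z + (1 - t) • w‖ ≤ ‖z‖ + ‖w‖ := by
    intro t ht
    have h1 : |t| ≤ 1 := abs_le.mpr ⟨by linarith [ht.1], ht.2⟩
    have h2 : |1 - t| ≤ 1 := abs_le.mpr ⟨by linarith [ht.2], by linarith [ht.1]⟩
    calc ‖t • z + (1 - t) • w‖ ≤ ‖t • z‖ + ‖(1 - t) • w‖ := norm_add_le _ _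
      _ = |t| * ‖z‖ + |1 - t| * ‖w‖ := by
          rw [norm_smul, norm_smul]; simp [Real.norm_eq_abs]
      _ ≤ ‖z‖ + ‖w‖ := by
          nlinarith [norm_nonneg z, norm_nonneg w, abs_nonneg t, abs_nonneg (1-t)]
  -- measurability and integrability of the operator-valued map
  have hγc : Continuous fun t : ℝ => t • z + (1 - t) • w := by fun_prop
  have hmeas : Measurable fun t : ℝ => D2H p (t • z + (1 - t) • w) :=
    (D2H_measurable p).comp hγc.measurable
  have hf : IntegrableOn (fun t : ℝ => D2H p (t • z + (1 - t) • w)) (Set.Icc (0:ℝ) 1) := by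
    refine Integrable.mono' (integrable_const ((p-1)*(‖z‖ + ‖w‖)^(p-2)))
      hmeas.aestronglyMeasurable ?_
    rw [ae_restrict_iff' measurableSet_Icc]
    refine ae_of_all _ fun t ht => ?_
    refine (D2H_norm_le p hp _).trans ?_
    gcongr
    · linarith
    · exact hseg t ht
  -- interchange integral and quadratic form
  have hcomm : ⟪(∫ t in Set.Icc (0:ℝ) 1, D2H p (t • z + (1 - t) • w)) ξ, ξ⟫
      = ∫ t in Set.Icc (0:ℝ) 1, ⟪D2H p (t • z + (1 - t) • w) ξ, ξ⟫ := by
    have h := ((innerSL ℝ ξ).comp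
      (ContinuousLinearMap.apply ℝ (EuclideanSpace ℝ (Fin N)) ξ)).integral_comp_comm hf
    simp only [ContinuousLinearMap.coe_comp', Function.comp_apply,
      ContinuousLinearMap.apply_apply, innerSL_apply_apply] at h
    rw [real_inner_comm, ← h]
    exact setIntegral_congr_fun measurableSet_Icc fun t _ => real_inner_comm _ _
  rw [hcomm]
  -- integrability of the scalar integrand
  have hQmeas : Measurable fun t : ℝ => ⟪D2H p (t • z + (1 - t) • w) ξ, ξ⟫ := by
    have hc : Continuous fun A : EuclideanSpace ℝ (Fin N) →L[ℝ] EuclideanSpace ℝ (Fin N) =>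
        ⟪A ξ, ξ⟫ :=
      Continuous.inner ((ContinuousLinearMap.apply ℝ (EuclideanSpace ℝ (Fin N)) ξ).continuous)
        continuous_const
    exact hc.measurable.comp hmeas
  have hQbound : ∀ t ∈ Set.Icc (0:ℝ) 1,
      ⟪D2H p (t • z + (1 - t) • w) ξ, ξ⟫ ≤ (p-1)*(‖z‖ + ‖w‖)^(p-2)*‖ξ‖^2 := by
    intro t ht
    refine (D2H_inner_ub p hp _ ξ).trans ?_
    gcongr
    · linarith
    · exact hseg t ht
  have hQpos : ∀ t : ℝ, 0 ≤ ⟪D2H p (t • z + (1 - t) • w) ξ, ξ⟫ := fun t =>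
    le_trans (by positivity) (D2H_inner_lb p hp _ ξ)
  have hQint : IntegrableOn (fun t : ℝ => ⟪D2H p (t • z + (1 - t) • w) ξ, ξ⟫)
      (Set.Icc (0:ℝ) 1) := by
    refine Integrable.mono' (integrable_const ((p-1)*(‖z‖ + ‖w‖)^(p-2)*‖ξ‖^2))
      hQmeas.aestronglyMeasurable ?_
    rw [ae_restrict_iff' measurableSet_Icc]
    refine ae_of_all _ fun t ht => ?_
    rw [Real.norm_eq_abs, abs_of_nonneg (hQpos t)]
    exact hQbound t ht
  constructor
  · -- lower bound
    obtain ⟨a, hsub, hlow⟩ : ∃ a : ℝ, Set.Icc a (a + 1/4) ⊆ Set.Icc (0:ℝ) 1 ∧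
        ∀ t ∈ Set.Icc a (a + 1/4), (‖z‖ + ‖w‖)/4 ≤ ‖t • z + (1 - t) • w‖ := by
      rcases le_total ‖w‖ ‖z‖ with h | h
      · refine ⟨3/4, fun t ht => ⟨by linarith [ht.1], by linarith [ht.2]⟩, fun t ht => ?_⟩
        have h1 : ‖t • z‖ ≤ ‖t • z + (1 - t) • w‖ + ‖(1 - t) • w‖ := by
          calc ‖t • z‖ = ‖(t • z + (1 - t) • w) - (1 - t) • w‖ := by rw [add_sub_cancel_right]
            _ ≤ _ := norm_sub_le _ _
        rw [norm_smul, norm_smul, Real.norm_eq_abs, Real.norm_eq_abs,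
          abs_of_nonneg (by linarith [ht.1] : (0:ℝ) ≤ t),
          abs_of_nonneg (by linarith [ht.2] : (0:ℝ) ≤ 1 - t)] at h1
        nlinarith [ht.1, ht.2, norm_nonneg z, norm_nonneg w]
      · refine ⟨0, fun t ht => ⟨ht.1, by linarith [ht.2]⟩, fun t ht => ?_⟩
        have h1 : ‖(1 - t) • w‖ ≤ ‖t • z + (1 - t) • w‖ + ‖t • z‖ := by
          calc ‖(1 - t) • w‖ = ‖(t • z + (1 - t) • w) - t • z‖ := by
                rw [add_comm (t • z), add_sub_cancel_right]
            _ ≤ _ := norm_sub_le _ _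
        rw [norm_smul, norm_smul, Real.norm_eq_abs, Real.norm_eq_abs,
          abs_of_nonneg (by linarith [ht.1] : (0:ℝ) ≤ t),
          abs_of_nonneg (by linarith [ht.2] : (0:ℝ) ≤ 1 - t)] at h1
        nlinarith [ht.1, ht.2, norm_nonneg z, norm_nonneg w]
    have step2 : ∫ t in Set.Icc a (a + 1/4), ⟪D2H p (t • z + (1 - t) • w) ξ, ξ⟫
        ≤ ∫ t in Set.Icc (0:ℝ) 1, ⟪D2H p (t • z + (1 - t) • w) ξ, ξ⟫ :=
      setIntegral_mono_set hQint (ae_of_all _ hQpos) (HasSubset.Subset.eventuallyLE hsub)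
    have step1 : (1/4) * (((‖z‖ + ‖w‖)/4)^(p-2)*‖ξ‖^2)
        ≤ ∫ t in Set.Icc a (a + 1/4), ⟪D2H p (t • z + (1 - t) • w) ξ, ξ⟫ := by
      have hconst : ∫ _t in Set.Icc a (a + 1/4), (((‖z‖ + ‖w‖)/4)^(p-2)*‖ξ‖^2)
          = (1/4) * (((‖z‖ + ‖w‖)/4)^(p-2)*‖ξ‖^2) := by
        rw [setIntegral_const]
        rw [Real.volume_real_Icc]
        norm_num
      rw [← hconst]
      refine setIntegral_mono_on (integrable_const _) (hQint.mono_set hsub)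
        measurableSet_Icc fun t ht => ?_
      refine le_trans ?_ (D2H_inner_lb p hp _ ξ)
      gcongr
      exact hlow t ht
    refine le_trans (le_of_eq ?_) (le_trans step1 step2)
    -- arithmetic: 4^(-(p-1)) * M^(p-2) = (1/4) * (M/4)^(p-2)
    have h4 : ((‖z‖ + ‖w‖)/4 : ℝ)^(p-2) = (‖z‖ + ‖w‖)^(p-2) / 4^(p-2) :=
      Real.div_rpow hM (by norm_num : (0:ℝ) ≤ 4) _
    have h5 : (4:ℝ)^(-(p-1)) = 1/4 * ((4:ℝ)^(p-2))⁻¹ := by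
      rw [Real.rpow_neg (by norm_num : (0:ℝ) ≤ 4), show p-1 = (p-2)+1 by ring,
        Real.rpow_add_one (by norm_num : (4:ℝ) ≠ 0), mul_inv]
      ring
    rw [h4, h5]
    ring
  · -- upper bound
    calc ∫ t in Set.Icc (0:ℝ) 1, ⟪D2H p (t • z + (1 - t) • w) ξ, ξ⟫
        ≤ ∫ _t in Set.Icc (0:ℝ) 1, ((p-1)*(‖z‖ + ‖w‖)^(p-2)*‖ξ‖^2) :=
          setIntegral_mono_on hQint (integrable_const _) measurableSet_Icc hQbound
      _ = (p-1)*(‖z‖ + ‖w‖)^(p-2)*‖ξ‖^2 := by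
          rw [setIntegral_const, Real.volume_real_Icc]
          norm_num
end
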